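/- Let parts V_1,...,V_p have sizes n_i > \lambda_i, where \lambda = (\lambda_1,...,\lambda_p) is a partition of k. The lattice generated by the vectors e_S, over all \lambda-balanced hyperedges S (sets containing exactly \lambda_i vertices of V_i), equals the set of integer vectors d = (d^1;...;d^p) for which there exists q \in Z with \sum_j d^i_j = \lambda_i q for all i. -/
import Mathlib


/-- A hyperedge `S` is `λ`-balanced if it contains exactly `lam i` vertices of the `i`-th
part `V_i`. -/
def IsBalanced {p : ℕ} (n : Fin p → ℕ) (lam : Fin p → ℕ)
    (S : Finset (Σ i : Fin p, Fin (n i))) : Prop :=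
  ∀ i : Fin p, (S.filter (fun v => v.1 = i)).card = lam i

/-- The indicator vector of a hyperedge. -/
def eS {p : ℕ} (n : Fin p → ℕ) (S : Finset (Σ i : Fin p, Fin (n i))) :
    (Σ i : Fin p, Fin (n i)) → ℤ :=
  fun v => if v ∈ S then 1 else 0


section
variable {p : ℕ} {n lam : Fin p → ℕ}

lemma filter_fst_eq (S : Finset (Σ i : Fin p, Fin (n i))) (i : Fin p) :
    S.filter (fun v => v.1 = i)
      = (Finset.univ.filter (fun j : Fin (n i) => ⟨i, j⟩ ∈ S)).map
          ⟨Sigma.mk i, sigma_mk_injective⟩ := by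
  ext ⟨i', j⟩
  simp only [Finset.mem_filter, Finset.mem_map, Finset.mem_univ, true_and,
    Function.Embedding.coeFn_mk]
  constructor
  · rintro ⟨hS, rfl⟩; exact ⟨j, hS, rfl⟩
  · rintro ⟨b, hb, h⟩; exact ⟨h ▸ hb, (congrArg Sigma.fst h).symm⟩

lemma col_sum {S : Finset (Σ i : Fin p, Fin (n i))} (hS : IsBalanced n lam S) (i : Fin p) :
    (∑ j : Fin (n i), eS n S ⟨i, j⟩) = (lam i : ℤ) := by
  have h := hS i
  rw [filter_fst_eq, Finset.card_map] at h
  simp only [eS, Finset.sum_boole, h]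

lemma balanced_sigma (T : ∀ i, Finset (Fin (n i))) (hT : ∀ i, (T i).card = lam i) :
    IsBalanced n lam (Finset.univ.sigma fun i => T i) := by
  intro i
  have : (Finset.univ.sigma fun i' => T i').filter (fun v => v.1 = i)
      = ({i} : Finset (Fin p)).sigma fun i' => T i' := by
    ext ⟨i', j⟩
    simp only [Finset.mem_filter, Finset.mem_sigma, Finset.mem_univ, true_and,
      Finset.mem_singleton]
    tauto
  rw [this, Finset.card_sigma, Finset.sum_singleton, hT]

lemma mem_sigma_univ (T : ∀ i, Finset (Fin (n i))) (i : Fin p) (j : Fin (n i)) :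
    (⟨i, j⟩ : Σ i, Fin (n i)) ∈ Finset.univ.sigma (fun i' => T i') ↔ j ∈ T i := by
  simp [Finset.mem_sigma]

end

section
variable {p : ℕ} {n lam : Fin p → ℕ}

def ind (v : Σ i : Fin p, Fin (n i)) : (Σ i : Fin p, Fin (n i)) → ℤ :=
  fun w => if w = v then 1 else 0

lemma diff_mem (hpos : ∀ i, 0 < lam i) (hn : ∀ i, lam i < n i)
    (i : Fin p) (j j' : Fin (n i)) :
    (ind ⟨i, j⟩ - ind ⟨i, j'⟩ : (Σ i, Fin (n i)) → ℤ) ∈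
      AddSubgroup.closure {v | ∃ S : Finset (Σ i : Fin p, Fin (n i)),
        IsBalanced n lam S ∧ v = eS n S} := by
  rcases eq_or_ne j j' with rfl | hne
  · rw [sub_self]; exact zero_mem _
  have hB : ∀ i', ∃ s : Finset (Fin (n i')), s ⊆ Finset.univ ∧ s.card = lam i' := by
    intro i'
    obtain ⟨s, h1, h2⟩ := Finset.exists_subset_card_eq
      (s := (Finset.univ : Finset (Fin (n i')))) (by simpa using (hn i').le)
    exact ⟨s, h1, h2⟩
  choose B hBs hB using hB
  have hcard : ((Finset.univ : Finset (Fin (n i))) \ {j, j'}).card = n i - 2 := by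
    rw [Finset.card_sdiff_of_subset (Finset.subset_univ _)]
    simp [Finset.card_insert_of_notMem, hne]
  obtain ⟨t, hts, htc⟩ := Finset.exists_subset_card_eq
    (s := (Finset.univ : Finset (Fin (n i))) \ {j, j'}) (n := lam i - 1)
    (by rw [hcard]; have := hn i; have := hpos i; omega)
  have hjt : j ∉ t := fun h => by simpa using hts h
  have hj't : j' ∉ t := fun h => by simpa using hts h
  set T1 := Function.update B i (insert j t) with hT1
  set T2 := Function.update B i (insert j' t) with hT2
  have hc1 : ∀ i', (T1 i').card = lam i' := by
    intro i'
    rcases eq_or_ne i' i with rfl | h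
    · rw [hT1, Function.update_self, Finset.card_insert_of_notMem hjt, htc]
      have := hpos i'; omega
    · rw [hT1, Function.update_of_ne h, hB]
  have hc2 : ∀ i', (T2 i').card = lam i' := by
    intro i'
    rcases eq_or_ne i' i with rfl | h
    · rw [hT2, Function.update_self, Finset.card_insert_of_notMem hj't, htc]
      have := hpos i'; omega
    · rw [hT2, Function.update_of_ne h, hB]
  have h1 : eS n (Finset.univ.sigma fun i' => T1 i') ∈ AddSubgroup.closure {v | ∃ S : Finset (Σ i : Fin p, Fin (n i)),
        IsBalanced n lam S ∧ v = eS n S} :=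
    AddSubgroup.subset_closure ⟨_, balanced_sigma T1 hc1, rfl⟩
  have h2 : eS n (Finset.univ.sigma fun i' => T2 i') ∈ AddSubgroup.closure {v | ∃ S : Finset (Σ i : Fin p, Fin (n i)),
        IsBalanced n lam S ∧ v = eS n S} :=
    AddSubgroup.subset_closure ⟨_, balanced_sigma T2 hc2, rfl⟩
  have key : (ind ⟨i, j⟩ - ind ⟨i, j'⟩ : (Σ i, Fin (n i)) → ℤ)
      = eS n (Finset.univ.sigma fun i' => T1 i')
        - eS n (Finset.univ.sigma fun i' => T2 i') := by
    funext w
    obtain ⟨i'', m⟩ := w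
    simp only [Pi.sub_apply, eS, ind, mem_sigma_univ]
    rcases eq_or_ne i'' i with rfl | h
    · rw [hT1, hT2, Function.update_self, Function.update_self]
      rcases eq_or_ne m j with rfl | hmj
      · simp [hjt, hne, Finset.mem_insert]
      · rcases eq_or_ne m j' with rfl | hmj'
        · simp [hj't, hmj, Ne.symm hne]
        · simp [Finset.mem_insert, hmj, hmj']
    · rw [hT1, hT2, Function.update_of_ne h, Function.update_of_ne h]
      simp [Sigma.ext_iff, h]
  rw [key]
  exact sub_mem h1 h2

end


/-- Let `λ = (λ₁,…,λ_p)` be a partition of `k` and let the parts `V_i` have sizes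
`n_i > λ_i`. The lattice generated by the `e_S` over all `λ`-balanced hyperedges `S` equals
the set of integer vectors `d` for which there exists `q ∈ ℤ` with `∑_j d^i_j = λ_i q` for
all `i`. -/
theorem balanced_lattice (p k : ℕ) (n lam : Fin p → ℕ) (hpart : ∑ i, lam i = k)
    (hpos : ∀ i, 0 < lam i) (hn : ∀ i, lam i < n i)
    (d : (Σ i : Fin p, Fin (n i)) → ℤ) :
    d ∈ AddSubgroup.closure
        {v | ∃ S : Finset (Σ i : Fin p, Fin (n i)),
          IsBalanced n lam S ∧ v = eS n S} ↔
      ∃ q : ℤ, ∀ i : Fin p, (∑ j : Fin (n i), d ⟨i, j⟩) = (lam i : ℤ) * q := by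
  constructor
  · intro h
    let H : AddSubgroup ((Σ i : Fin p, Fin (n i)) → ℤ) :=
      { carrier := {d | ∃ q : ℤ, ∀ i : Fin p,
          (∑ j : Fin (n i), d ⟨i, j⟩) = (lam i : ℤ) * q}
        zero_mem' := ⟨0, fun i => by simp⟩
        add_mem' := by
          rintro a b ⟨qa, ha⟩ ⟨qb, hb⟩
          exact ⟨qa + qb, fun i => by
            simp only [Pi.add_apply, Finset.sum_add_distrib, ha i, hb i]; ring⟩
        neg_mem' := by
          rintro a ⟨qa, ha⟩
          exact ⟨-qa, fun i => by
            simp only [Pi.neg_apply, Finset.sum_neg_distrib, ha i]; ring⟩ }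
    have hsub : {v | ∃ S : Finset (Σ i : Fin p, Fin (n i)),
        IsBalanced n lam S ∧ v = eS n S} ⊆ (H : Set _) := by
      rintro v ⟨S, hS, rfl⟩
      exact ⟨1, fun i => by rw [col_sum hS]; ring⟩
    exact (AddSubgroup.closure_le H).2 hsub h
  · rintro ⟨q, hq⟩
    have hB : ∀ i', ∃ s : Finset (Fin (n i')), s ⊆ Finset.univ ∧ s.card = lam i' := by
      intro i'
      obtain ⟨s, h1, h2⟩ := Finset.exists_subset_card_eq
        (s := (Finset.univ : Finset (Fin (n i')))) (by simpa using (hn i').le)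
      exact ⟨s, h1, h2⟩
    choose B hBs hBc using hB
    set S0 := Finset.univ.sigma (fun i' => B i') with hS0def
    have hS0 : IsBalanced n lam S0 := balanced_sigma B hBc
    have hS0mem : eS n S0 ∈ AddSubgroup.closure {v | ∃ S : Finset (Σ i : Fin p, Fin (n i)),
        IsBalanced n lam S ∧ v = eS n S} :=
      AddSubgroup.subset_closure ⟨S0, hS0, rfl⟩
    set j0 : ∀ i : Fin p, Fin (n i) := fun i => ⟨0, by have := hpos i; have := hn i; omega⟩
      with hj0
    set d' : (Σ i : Fin p, Fin (n i)) → ℤ := fun w => d w - q * eS n S0 w with hd'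
    have hd'col : ∀ i : Fin p, (∑ j : Fin (n i), d' ⟨i, j⟩) = 0 := by
      intro i
      simp only [hd', Finset.sum_sub_distrib, ← Finset.mul_sum, col_sum hS0, hq i]
      ring
    have key : d = q • eS n S0
        + ∑ v : Σ i : Fin p, Fin (n i), d' v • (ind v - ind ⟨v.1, j0 v.1⟩) := by
      funext w
      obtain ⟨i, m⟩ := w
      simp only [Pi.add_apply, Finset.sum_apply, Pi.smul_apply, Pi.sub_apply,
        smul_eq_mul, ind, mul_sub]
      rw [Finset.sum_sub_distrib]
      have hfirst : (∑ v : Σ i : Fin p, Fin (n i),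
          d' v * (if (⟨i, m⟩ : Σ i, Fin (n i)) = v then 1 else 0)) = d' ⟨i, m⟩ := by
        simp [mul_ite, Finset.sum_ite_eq]
      have hsecond : (∑ v : Σ i : Fin p, Fin (n i),
          d' v * (if (⟨i, m⟩ : Σ i, Fin (n i)) = ⟨v.1, j0 v.1⟩ then 1 else 0)) = 0 := by
        rw [← Finset.univ_sigma_univ, Finset.sum_sigma]
        apply Finset.sum_eq_zero
        intro i' _
        rcases eq_or_ne i' i with rfl | h
        · rcases eq_or_ne m (j0 i') with rfl | hm
          · simpa using hd'col i'
          · simp [Sigma.ext_iff, hm]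
        · simp [Sigma.ext_iff, h.symm]
      rw [hfirst, hsecond]
      simp [hd']
    rw [key]
    refine add_mem (AddSubgroup.zsmul_mem _ hS0mem q) (sum_mem fun v _ => ?_)
    obtain ⟨i, j⟩ := v
    exact AddSubgroup.zsmul_mem _ (diff_mem hpos hn i j (j0 i)) _
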